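/- Let X be a one-sided shift space with Sp_l(X) finite and containing no periodic point. Then for every left special element ω there exists N ∈ ℕ such that for all l > n ≥ N, the point σ^n(ω) is isolated in l-past equivalence, i.e., P_l(σ^n(ω)) = P_l(y) implies y = σ^n(ω). -/

import Mathlib

open Function Set

variable {A : Type*}

/-- The one-sided shift map. -/
def shiftMap (x : ℕ → A) : ℕ → A := fun n => x (n + 1)

/-- Prepend a finite word to a one-sided sequence. -/
def prependWord (μ : List A) (x : ℕ → A) : ℕ → A :=
  fun n => if h : n < μ.length then μ.get ⟨n, h⟩ else x (n - μ.length)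

lemma prepend_lt (μ : List A) (x : ℕ → A) (i : ℕ) (h : i < μ.length) :
    prependWord μ x i = μ.get ⟨i, h⟩ := dif_pos h

lemma prepend_ge (μ : List A) (x : ℕ → A) (i : ℕ) (h : μ.length ≤ i) :
    prependWord μ x i = x (i - μ.length) := dif_neg (by omega)

lemma shiftMap_iterate_apply (x : ℕ → A) (n i : ℕ) : shiftMap^[n] x i = x (i + n) := by
  induction n generalizing x with
  | zero => simp
  | succ n ih =>
    rw [Function.iterate_succ_apply, ih]
    simp [shiftMap, Nat.add_assoc, Nat.add_comm 1 n]

lemma shift_prepend (μ : List A) (x : ℕ → A) {k : ℕ} (h : μ.length = k) :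
    shiftMap^[k] (prependWord μ x) = x := by
  funext i
  rw [shiftMap_iterate_apply, prepend_ge _ _ _ (by omega)]
  congr 1; omega

lemma prepend_append (κ μ : List A) (x : ℕ → A) :
    prependWord (κ ++ μ) x = prependWord κ (prependWord μ x) := by
  funext i
  by_cases h1 : i < κ.length
  · rw [prepend_lt _ _ _ (by simp; omega), prepend_lt _ _ _ h1]
    simp only [List.get_eq_getElem]; exact List.getElem_append_left h1
  · rw [prepend_ge κ _ _ (by omega)]
    by_cases h2 : i < κ.length + μ.length
    · rw [prepend_lt _ _ _ (by simp; omega), prepend_lt _ _ _ (by omega)]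
      simp only [List.get_eq_getElem]; exact List.getElem_append_right (by omega)
    · rw [prepend_ge _ _ _ (by simp; omega), prepend_ge _ _ _ (by omega)]
      congr 1; simp; omega

lemma shift_mem_iter {X : Set (ℕ → A)} (hseq : shiftMap '' X = X) {x : ℕ → A}
    (hx : x ∈ X) (k : ℕ) : shiftMap^[k] x ∈ X := by
  induction k with
  | zero => exact hx
  | succ k ih =>
    rw [Function.iterate_succ_apply']
    exact hseq ▸ Set.mem_image_of_mem _ ih

lemma eq_prepend_of_shift {q p : ℕ → A} (h : shiftMap q = p) :
    q = prependWord [q 0] p := by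
  funext i
  match i with
  | 0 => rw [prepend_lt _ _ _ (by simp)]; rfl
  | i + 1 =>
    rw [prepend_ge _ _ _ (by simp)]
    simpa [shiftMap] using congrFun h i

lemma exists_prepend {X : Set (ℕ → A)} (hseq : shiftMap '' X = X) {p : ℕ → A}
    (hp : p ∈ X) (k : ℕ) : ∃ κ : List A, κ.length = k ∧ prependWord κ p ∈ X := by
  induction k generalizing p with
  | zero =>
    refine ⟨[], rfl, ?_⟩
    have : prependWord ([] : List A) p = p := by
      funext i; rw [prepend_ge _ _ _ (by simp)]; simp
    rwa [this]
  | succ k ih =>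
    obtain ⟨q, hq, hqp⟩ : ∃ q ∈ X, shiftMap q = p := by
      have := hseq ▸ hp; exact this
    obtain ⟨κ, hκl, hκ⟩ := ih hq
    refine ⟨κ ++ [q 0], by simp [hκl], ?_⟩
    rw [prepend_append, ← eq_prepend_of_shift hqp]
    exact hκ

lemma sep_of_finite {S : Set (ℕ → A)} (h : S.Finite) :
    ∃ N : ℕ, ∀ x ∈ S, ∀ y ∈ S, (∀ i < N, x i = y i) → x = y := by
  classical
  let F := (h.prod h).toFinset
  let g : (ℕ → A) × (ℕ → A) → ℕ := fun p =>
    if hp : p.1 = p.2 then 0 else Classical.choose (Function.ne_iff.mp hp)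
  refine ⟨F.sup g + 1, fun x hx y hy hagree => ?_⟩
  by_contra hne
  have hmem : (x, y) ∈ F := by
    simp only [F, Set.Finite.mem_toFinset, Set.mem_prod]; exact ⟨hx, hy⟩
  have h1 : g (x, y) ≤ F.sup g := Finset.le_sup hmem
  have h2 : x (g (x, y)) ≠ y (g (x, y)) := by
    simp only [g, dif_neg hne]
    exact Classical.choose_spec (Function.ne_iff.mp hne)
  exact h2 (hagree _ (by omega))


/-- `PastSet X l x` is the set `P_l(x)` of words `μ` of length `l` with `μx ∈ X`. -/
def PastSet (X : Set (ℕ → A)) (l : ℕ) (x : ℕ → A) : Set (List A) :=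
  {μ | μ.length = l ∧ prependWord μ x ∈ X}

/-- A point is left special if it has at least two shift-preimages in `X`. -/
def IsLeftSpecial (X : Set (ℕ → A)) (x : ℕ → A) : Prop :=
  x ∈ X ∧ ∃ y z, y ∈ X ∧ z ∈ X ∧ y ≠ z ∧ shiftMap y = x ∧ shiftMap z = x

/-- The set of left special elements of `X`. -/
def SpL (X : Set (ℕ → A)) : Set (ℕ → A) := {x | IsLeftSpecial X x}

/-- A point is periodic if `σ^n x = x` for some `n ≥ 1`. -/
def IsPer (x : ℕ → A) : Prop := ∃ n ≥ 1, shiftMap^[n] x = x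

/-- The language of `X`: finite words occurring as factors of points of `X`. -/
def Lang (X : Set (ℕ → A)) : Set (List A) :=
  {μ | ∃ x ∈ X, ∃ n : ℕ, ∀ i : Fin μ.length, x (n + i) = μ.get i}

/-- The two-sided shift space associated with `X` (inverse limit identification). -/
def twoSided (X : Set (ℕ → A)) : Set (ℤ → A) :=
  {z | ∀ n : ℤ, (fun i : ℕ => z (n + i)) ∈ X}

/-- Left special elements of a two-sided shift space. -/
def SpLZ (Y : Set (ℤ → A)) : Set (ℤ → A) :=
  {z | z ∈ Y ∧ ∃ z' ∈ Y, z' (-1) ≠ z (-1) ∧ ∀ i : ℕ, z' i = z i}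

/-- Right tail equivalence. -/
def Rte (x y : ℕ → A) : Prop := ∃ M M' : ℕ, shiftMap^[M] x = shiftMap^[M'] y

/-- forward iterates of left special points are eventually isolated
in `l`-past equivalence. -/
theorem stmt5 [Finite A] [TopologicalSpace A] [DiscreteTopology A]
    (X : Set (ℕ → A)) (hne : X.Nonempty) (hcl : IsClosed X)
    (hseq : shiftMap '' X = X)
    (hfin : (SpL X).Finite) (hper : ∀ x ∈ SpL X, ¬ IsPer x) :
    ∀ ω, IsLeftSpecial X ω → ∃ N : ℕ, ∀ l n : ℕ, N ≤ n → n < l →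
      ∀ y ∈ X, PastSet X l (shiftMap^[n] ω) = PastSet X l y → y = shiftMap^[n] ω := by
  intro ω hω
  have hωSp : ω ∈ SpL X := hω
  obtain ⟨hωX, y', z', hy', hz', hne', hsy, hsz⟩ := hω
  have hya : y' = prependWord [y' 0] ω := eq_prepend_of_shift hsy
  have hza : z' = prependWord [z' 0] ω := eq_prepend_of_shift hsz
  set a := y' 0 with ha
  set b := z' 0 with hb
  have hab : a ≠ b := fun h => hne' (by rw [hya, hza, h])
  have haX : prependWord [a] ω ∈ X := hya ▸ hy'
  have hbX : prependWord [b] ω ∈ X := hza ▸ hz'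
  obtain ⟨N, hN⟩ := sep_of_finite hfin
  refine ⟨N, fun l n hNn hnl y hyX hP => ?_⟩
  obtain ⟨μ, hμlen, hμget⟩ : ∃ μ : List A, μ.length = n ∧
      ∀ i (h : i < μ.length), μ.get ⟨i, h⟩ = ω i :=
    ⟨List.ofFn (fun i : Fin n => ω i), List.length_ofFn,
      fun i h => by simp [List.get_ofFn]⟩
  have hμω : prependWord μ (shiftMap^[n] ω) = ω := by
    funext i
    by_cases h : i < μ.length
    · rw [prepend_lt _ _ _ h, hμget]
    · rw [prepend_ge _ _ _ (by omega), shiftMap_iterate_apply]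
      congr 1; omega
  have key : ∀ c : A, prependWord [c] ω ∈ X → prependWord [c] (prependWord μ y) ∈ X := by
    intro c hc
    obtain ⟨κ, hκl, hκ⟩ := exists_prepend hseq hc (l - n - 1)
    have hmem : (κ ++ ([c] ++ μ)) ∈ PastSet X l (shiftMap^[n] ω) := by
      refine ⟨by simp [hκl, hμlen]; omega, ?_⟩
      rw [prepend_append, prepend_append, hμω]
      exact hκ
    rw [hP] at hmem
    obtain ⟨hlen2, hmem2⟩ := hmem
    rw [prepend_append, prepend_append] at hmem2
    have h3 := shift_mem_iter hseq hmem2 κ.length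
    rwa [shift_prepend _ _ rfl] at h3
  have haY := key a haX
  have hbY := key b hbX
  have hμyX : prependWord μ y ∈ X := by
    have h4 := shift_mem_iter hseq haY 1
    rwa [shift_prepend ([a]) (prependWord μ y) (k := 1) rfl] at h4
  have hls : IsLeftSpecial X (prependWord μ y) := by
    refine ⟨hμyX, prependWord [a] (prependWord μ y), prependWord [b] (prependWord μ y),
      haY, hbY, ?_, ?_, ?_⟩
    · intro h
      apply hab
      have h0 := congrFun h 0
      rw [prepend_lt _ _ _ (by simp), prepend_lt _ _ _ (by simp)] at h0
      exact h0
    · have h5 := shift_prepend ([a]) (prependWord μ y) (k := 1) rfl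
      rwa [Function.iterate_one] at h5
    · have h5 := shift_prepend ([b]) (prependWord μ y) (k := 1) rfl
      rwa [Function.iterate_one] at h5
  have heq := hN _ hls _ hωSp (fun i hi => by rw [prepend_lt _ _ _ (by omega), hμget])
  rw [← heq, shift_prepend _ _ hμlen]
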